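/- arXiv:1512.08763 — 8 statements merged into one kernel-verified Lean document; each statement's English description precedes it below -/
import Mathlib

section
/- Let D ≥ 2 and ρ ∈ ℝ^D with ρ_D ≠ 0. Let ξ : ℝ × 𝕋^D × ℝ → ℝ be continuous and satisfy ξ(0,θ,x) = x and the cocycle property ξ(t+τ, θ, x) = ξ(t, θ + τρ, ξ(τ,θ,x)) for all t, τ ∈ ℝ, θ ∈ 𝕋^D, x ∈ ℝ. Write ι : 𝕋^{D-1} → 𝕋^D, ι(θ) = (θ, 0), and ω = (ρ₁/ρ_D, …, ρ_{D-1}/ρ_D) mod ℤ^{D-1}. Suppose φ̃ : 𝕋^{D-1} → ℝ is invariant under the first return map, i.e. ξ(1/ρ_D, ι(θ), φ̃(θ)) = φ̃(θ + ω) for all θ ∈ 𝕋^{D-1}. Then there exists a unique φ : 𝕋^D → ℝ such that ξ(t, θ, φ(θ)) = φ(θ + tρ) for all t ∈ ℝ and θ ∈ 𝕋^D and such that φ(ι(θ)) = φ̃(θ) for all θ ∈ 𝕋^{D-1}; moreover, φ is continuous if and only if φ̃ is continuous. -/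
/-- Proposition 3.1, existence/uniqueness part:
An invariant graph of the first return map of a quasiperiodically driven skew product
flow extends uniquely to an invariant graph of the flow, continuous iff the original is.
The torus `𝕋^n` is modelled as `Fin n → AddCircle (1:ℝ)`, `D = d + 1` with `d ≥ 1`,
and translation `θ + tρ` acts coordinatewise. -/
theorem first_return_invariant_graph_extends
    (d : ℕ) (hd : 1 ≤ d) (ρ : Fin (d + 1) → ℝ) (hρ : ρ (Fin.last d) ≠ 0)
    (ξ : ℝ → (Fin (d + 1) → AddCircle (1:ℝ)) → ℝ → ℝ)
    (hcont : Continuous fun p : ℝ × ((Fin (d + 1) → AddCircle (1:ℝ)) × ℝ) =>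
      ξ p.1 p.2.1 p.2.2)
    (hinit : ∀ θ x, ξ 0 θ x = x)
    (hcocycle : ∀ t τ θ x,
      ξ (t + τ) θ x
        = ξ t (fun i => θ i + ((τ * ρ i : ℝ) : AddCircle (1:ℝ))) (ξ τ θ x))
    (ι : (Fin d → AddCircle (1:ℝ)) → (Fin (d + 1) → AddCircle (1:ℝ)))
    (hι : ∀ θ, ι θ = Fin.snoc θ (0 : AddCircle (1:ℝ)))
    (ω : Fin d → AddCircle (1:ℝ))
    (hω : ∀ i, ω i = ((ρ i.castSucc / ρ (Fin.last d) : ℝ) : AddCircle (1:ℝ)))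
    (φt : (Fin d → AddCircle (1:ℝ)) → ℝ)
    (hφt : ∀ θ, ξ (1 / ρ (Fin.last d)) (ι θ) (φt θ) = φt (fun i => θ i + ω i)) :
    ∃ φ : (Fin (d + 1) → AddCircle (1:ℝ)) → ℝ,
      ((∀ t θ, ξ t θ (φ θ)
          = φ (fun i => θ i + ((t * ρ i : ℝ) : AddCircle (1:ℝ))))
        ∧ (∀ θ, φ (ι θ) = φt θ)
        ∧ (Continuous φ ↔ Continuous φt))
      ∧ ∀ ψ : (Fin (d + 1) → AddCircle (1:ℝ)) → ℝ,
          ((∀ t θ, ξ t θ (ψ θ)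
              = ψ (fun i => θ i + ((t * ρ i : ℝ) : AddCircle (1:ℝ))))
            ∧ (∀ θ, ψ (ι θ) = φt θ)) → ψ = φ := by
  classical
  haveI : Fact ((0:ℝ) < 1) := ⟨one_pos⟩
  set r : ℝ := ρ (Fin.last d) with hr
  -- integer multiples of 1 vanish in `AddCircle 1`
  have coe_int_zero : ∀ k : ℤ, (((k : ℝ)) : AddCircle (1:ℝ)) = 0 := by
    intro k
    rw [AddCircle.coe_eq_zero_iff]
    exact ⟨k, by simp⟩
  -- the time-t maps are injective
  have hinj : ∀ t θ, Function.Injective (ξ t θ) := by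
    intro t θ x y hxy
    have h1 := hcocycle (-t) t θ x
    have h2 := hcocycle (-t) t θ y
    rw [neg_add_cancel, hinit] at h1 h2
    rw [hxy] at h1
    exact h1.trans h2.symm
  -- shifting `ι θ` by `c ρ` with `c r ≡ 0` stays in the image of `ι`
  have hshift : ∀ c : ℝ, ((c * r : ℝ) : AddCircle (1:ℝ)) = 0 →
      ∀ θ : Fin d → AddCircle (1:ℝ),
      (fun i => ι θ i + ((c * ρ i : ℝ) : AddCircle (1:ℝ)))
        = ι (fun j => θ j + ((c * ρ j.castSucc : ℝ) : AddCircle (1:ℝ))) := by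
    intro c hc θ
    funext i
    rw [hι, hι]
    refine Fin.lastCases ?_ ?_ i
    · simp [Fin.snoc_last, ← hr, hc]
    · intro j
      simp [Fin.snoc_castSucc]
  -- one-step lemma
  have step : ∀ (m : ℝ) (θ : Fin d → AddCircle (1:ℝ)),
      ξ (1 / r) (ι fun j => θ j + ((m / r * ρ j.castSucc : ℝ) : AddCircle (1:ℝ)))
        (φt fun j => θ j + ((m / r * ρ j.castSucc : ℝ) : AddCircle (1:ℝ)))
      = φt fun j => θ j + (((m + 1) / r * ρ j.castSucc : ℝ) : AddCircle (1:ℝ)) := by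
    intro m θ
    rw [hφt]
    congr 1
    funext j
    rw [hω, add_assoc, ← AddCircle.coe_add]
    congr 1
    field_simp
  -- iterated return map lemma
  have hA : ∀ (k : ℤ) (θ : Fin d → AddCircle (1:ℝ)),
      ξ ((k : ℝ) / r) (ι θ) (φt θ)
        = φt (fun i => θ i + (((k : ℝ) / r * ρ i.castSucc : ℝ) : AddCircle (1:ℝ))) := by
    intro k θ
    induction k using Int.induction_on with
    | zero => simp [hinit]
    | succ k ih =>
      push_cast at ih ⊢
      have hc : (((k : ℝ) / r * r : ℝ) : AddCircle (1:ℝ)) = 0 := by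
        rw [div_mul_cancel₀ _ hρ]
        simpa using coe_int_zero (k : ℤ)
      have hco := hcocycle (1 / r) ((k : ℝ) / r) (ι θ) (φt θ)
      rw [ih, hshift _ hc θ, step] at hco
      rw [show (1 : ℝ) / r + (k : ℝ) / r = ((k : ℝ) + 1) / r from by ring] at hco
      exact hco
    | pred k ih =>
      push_cast at ih ⊢
      have hc : (((-(k : ℝ) - 1) / r * r : ℝ) : AddCircle (1:ℝ)) = 0 := by
        rw [div_mul_cancel₀ _ hρ]
        have e2 : (-(k : ℝ) - 1) = ((-(k : ℤ) - 1 : ℤ) : ℝ) := by push_cast; ring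
        rw [e2]; exact coe_int_zero _
      have hco := hcocycle (1 / r) ((-(k : ℝ) - 1) / r) (ι θ) (φt θ)
      rw [hshift _ hc θ] at hco
      rw [show (1 : ℝ) / r + (-(k : ℝ) - 1) / r = -(k : ℝ) / r from by ring, ih] at hco
      apply hinj (1 / r)
        (ι fun j => θ j + (((-(k : ℝ) - 1) / r * ρ j.castSucc : ℝ) : AddCircle (1:ℝ)))
      rw [← hco, step (-(k : ℝ) - 1) θ,
        show -(k : ℝ) - 1 + 1 = -(k : ℝ) from by ring]
  -- covering setup
  set q : (Fin (d+1) → ℝ) → (Fin (d+1) → AddCircle (1:ℝ)) :=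
    fun y i => ((y i : ℝ) : AddCircle (1:ℝ)) with hq
  set bse : (Fin (d+1) → ℝ) → Fin d → AddCircle (1:ℝ) :=
    fun y i => ((y i.castSucc - y (Fin.last d) / r * ρ i.castSucc : ℝ) : AddCircle (1:ℝ))
    with hbse
  set Φ : (Fin (d+1) → ℝ) → ℝ :=
    fun y => ξ (y (Fin.last d) / r) (ι (bse y)) (φt (bse y)) with hΦ
  have hcover : ∀ y, (fun i => ι (bse y) i
      + ((y (Fin.last d) / r * ρ i : ℝ) : AddCircle (1:ℝ))) = q y := by
    intro y
    funext i
    rw [hι]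
    refine Fin.lastCases ?_ ?_ i
    · simp [Fin.snoc_last, ← hr, div_mul_cancel₀ _ hρ, hq]
    · intro j
      simp only [Fin.snoc_castSucc, hbse, hq, ← AddCircle.coe_add]
      congr 1
      ring
  -- descent: Φ only depends on the class mod ℤ^{d+1}
  have hB : ∀ y z, q y = q z → Φ y = Φ z := by
    intro y z h
    have hD : ((y (Fin.last d) : ℝ) : AddCircle (1:ℝ)) = z (Fin.last d) := by
      have := congrFun h (Fin.last d)
      simpa [hq] using this
    obtain ⟨k, hk⟩ : ∃ k : ℤ, y (Fin.last d) = z (Fin.last d) + (k : ℝ) := by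
      have h0 : ((y (Fin.last d) - z (Fin.last d) : ℝ) : AddCircle (1:ℝ)) = 0 := by
        rw [sub_eq_add_neg, AddCircle.coe_add, AddCircle.coe_neg, hD, add_neg_cancel]
      obtain ⟨k, hk⟩ := (AddCircle.coe_eq_zero_iff (1:ℝ)).mp h0
      exact ⟨k, by rw [zsmul_eq_mul, mul_one] at hk; linarith⟩
    have hb1 : (fun i => bse y i + (((k : ℝ) / r * ρ i.castSucc : ℝ) : AddCircle (1:ℝ)))
        = bse z := by
      funext i
      have hcs : ((y i.castSucc : ℝ) : AddCircle (1:ℝ)) = z i.castSucc := by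
        have := congrFun h i.castSucc
        simpa [hq] using this
      simp only [hbse, ← AddCircle.coe_add]
      have e : y i.castSucc - y (Fin.last d) / r * ρ i.castSucc + (k : ℝ) / r * ρ i.castSucc
          = y i.castSucc + (z i.castSucc - z (Fin.last d) / r * ρ i.castSucc
              - z i.castSucc) := by
        rw [hk]; field_simp; ring
      rw [e, AddCircle.coe_add, hcs, ← AddCircle.coe_add]
      congr 1
      ring
    have hc : (((k : ℝ) / r * r : ℝ) : AddCircle (1:ℝ)) = 0 := by
      rw [div_mul_cancel₀ _ hρ]; exact coe_int_zero k
    have e : y (Fin.last d) / r = z (Fin.last d) / r + (k : ℝ) / r := by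
      rw [hk]; ring
    simp only [hΦ]
    rw [e, hcocycle (z (Fin.last d) / r) ((k : ℝ) / r) (ι (bse y)) (φt (bse y)),
      hA k (bse y), hshift _ hc (bse y), hb1]
  -- the lift
  set rep : AddCircle (1:ℝ) → ℝ :=
    fun a => ((AddCircle.equivIco 1 0 a : Set.Ico (0:ℝ) (0 + 1)) : ℝ) with hrepdef
  have hrep : ∀ a, ((rep a : ℝ) : AddCircle (1:ℝ)) = a := by
    intro a
    exact (AddCircle.equivIco 1 0).symm_apply_apply a
  set φ : (Fin (d+1) → AddCircle (1:ℝ)) → ℝ :=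
    fun θ => Φ (fun i => rep (θ i)) with hφ
  have hqrep : ∀ θ, q (fun i => rep (θ i)) = θ := by
    intro θ
    funext i
    simp only [hq]
    exact hrep _
  have hC : ∀ y, φ (q y) = Φ y := by
    intro y
    have hkey : q (fun i => rep (q y i)) = q y := by
      funext i
      simp only [hq]
      exact hrep _
    simp only [hφ]
    exact hB _ y hkey
  -- invariance
  have P1 : ∀ t θ, ξ t θ (φ θ)
      = φ (fun i => θ i + ((t * ρ i : ℝ) : AddCircle (1:ℝ))) := by
    intro t θ
    set y : Fin (d+1) → ℝ := fun i => rep (θ i) with hy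
    have hqy : q y = θ := hqrep θ
    have hφθ : φ θ = Φ y := by rw [← hqy, hC]
    have h2 : (fun i => θ i + ((t * ρ i : ℝ) : AddCircle (1:ℝ)))
        = q (fun i => y i + t * ρ i) := by
      funext i
      simp only [hq, AddCircle.coe_add]
      rw [← congrFun hqy i]
    have hb : bse (fun i => y i + t * ρ i) = bse y := by
      funext i
      simp only [hbse]
      congr 1
      rw [← hr]
      field_simp
      ring
    have hlast : (y (Fin.last d) + t * ρ (Fin.last d)) / r = t + y (Fin.last d) / r := by
      rw [← hr]; field_simp; ring
    have hΦ2 : Φ (fun i => y i + t * ρ i)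
        = ξ (t + y (Fin.last d) / r) (ι (bse y)) (φt (bse y)) := by
      simp only [hΦ, hb]
      rw [hlast]
    have key := hcocycle t (y (Fin.last d) / r) (ι (bse y)) (φt (bse y))
    rw [hcover y] at key
    have e2 : φ (fun i => θ i + ((t * ρ i : ℝ) : AddCircle (1:ℝ)))
        = Φ (fun i => y i + t * ρ i) := by
      rw [h2]; exact hC (fun i => y i + t * ρ i)
    rw [e2, hΦ2, key, hqy, hφθ]
  -- restriction to the section
  have P2 : ∀ θ, φ (ι θ) = φt θ := by
    intro θ
    set y : Fin (d+1) → ℝ := Fin.snoc (fun i => rep (θ i)) 0 with hy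
    have hqy : q y = ι θ := by
      funext i
      simp only [hq, hy, hι]
      refine Fin.lastCases ?_ ?_ i
      · simp [Fin.snoc_last]
      · intro j
        simp [Fin.snoc_castSucc, hrep]
    have hbsey : bse y = θ := by
      funext i
      simp only [hbse, hy, Fin.snoc_last, Fin.snoc_castSucc]
      rw [zero_div, zero_mul, sub_zero]
      exact hrep _
    have hylast : y (Fin.last d) = 0 := by
      simp only [hy]
      exact Fin.snoc_last _ _
    rw [← hqy, hC]
    simp only [hΦ, hbsey, hylast, zero_div, hinit]
  -- continuity of ι
  have hιcont : Continuous ι := by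
    have e : ι = fun θ => (Fin.snoc θ (0 : AddCircle (1:ℝ)) : Fin (d+1) → AddCircle (1:ℝ)) := by
      funext θ
      rw [hι]
    rw [e]
    apply continuous_pi
    intro i
    refine Fin.lastCases ?_ ?_ i
    · simp only [Fin.snoc_last]; exact continuous_const
    · intro j
      simp only [Fin.snoc_castSucc]
      exact continuous_apply j
  -- q is an open quotient map
  have hqoq : IsOpenQuotientMap q := by
    have := IsOpenQuotientMap.piMap (fun _ : Fin (d+1) =>
      QuotientAddGroup.isOpenQuotientMap_mk (G := ℝ) (N := AddSubgroup.zmultiples (1:ℝ)))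
    exact this
  have P3f : Continuous φt → Continuous φ := by
    intro h
    have hbcont : Continuous bse := by
      rw [hbse]
      apply continuous_pi
      intro i
      have h1 : Continuous fun y : Fin (d+1) → ℝ =>
          y i.castSucc - y (Fin.last d) / r * ρ i.castSucc :=
        (continuous_apply i.castSucc).sub
          (by fun_prop)
      exact (AddCircle.continuous_mk' 1).comp h1
    have hlastcont : Continuous fun y : Fin (d+1) → ℝ => y (Fin.last d) / r :=
      by fun_prop
    have hΦcont : Continuous Φ := by
      rw [hΦ]
      exact hcont.comp (hlastcont.prodMk ((hιcont.comp hbcont).prodMk (h.comp hbcont)))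
    have e : φ ∘ q = Φ := funext hC
    rw [← hqoq.continuous_comp_iff, e]
    exact hΦcont
  have P3b : Continuous φ → Continuous φt := by
    intro h
    have e : φt = φ ∘ ι := funext fun θ => (P2 θ).symm
    rw [e]
    exact h.comp hιcont
  refine ⟨φ, ⟨P1, P2, ⟨P3b, P3f⟩⟩, ?_⟩
  rintro ψ ⟨hψ1, hψ2⟩
  funext θ
  set y : Fin (d+1) → ℝ := fun i => rep (θ i) with hy
  have hqy : q y = θ := hqrep θ
  calc ψ θ = ψ (q y) := by rw [hqy]
    _ = ξ (y (Fin.last d) / r) (ι (bse y)) (ψ (ι (bse y))) := by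
        rw [← hcover y, ← hψ1]
    _ = ξ (y (Fin.last d) / r) (ι (bse y)) (φt (bse y)) := by rw [hψ2]
    _ = Φ y := by simp only [hΦ]
    _ = φ (q y) := (hC y).symm
    _ = φ θ := by rw [hqy]
end

section
/- Let D ≥ 2, b > 1, β ∈ [0,1], ρ ∈ ℝ^D, θ ∈ 𝕋^D, T > 0, and let g : 𝕋^D → ℝ be continuous with 0 ≤ g ≤ 1. Suppose ξ : [0,T] → ℝ is differentiable with ξ'(t) = F_β(θ + tρ, ξ(t)) for all t ∈ [0,T] and ξ(0) = x with |x| ≤ 1, and suppose g(θ + sρ) = 0 for all s ∈ [0,T]. Then ξ(t) ≥ x for every t ∈ [0,T]. (Proposition 5.1(b).) -/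
open Set intervalIntegral MeasureTheory

/-- Sign preservation for a linear-type ODE `φ' = c·φ` on `[0,T]`. -/
lemma sign_preserved_aux {T : ℝ} (hT : 0 < T) {φ c : ℝ → ℝ}
    (hφ : ∀ t ∈ Set.Icc (0:ℝ) T, HasDerivWithinAt φ (c t * φ t) (Set.Icc (0:ℝ) T) t)
    (hc : ContinuousOn c (Set.Icc (0:ℝ) T)) (h0 : 0 ≤ φ 0) :
    ∀ t ∈ Set.Icc (0:ℝ) T, 0 ≤ φ t := by
  have huIcc : Set.uIcc (0:ℝ) T = Set.Icc 0 T := Set.uIcc_of_le hT.le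
  have hcint : IntegrableOn c (Set.Icc (0:ℝ) T) volume :=
    hc.integrableOn_compact isCompact_Icc
  set C : ℝ → ℝ := fun t => ∫ s in (0:ℝ)..t, c s with hC
  have hCcont : ContinuousOn C (Set.Icc (0:ℝ) T) := by
    have := continuousOn_primitive_interval (μ := volume) (f := c) (a := 0) (b := T)
      (by rwa [huIcc])
    rwa [huIcc] at this
  -- membership of Icc 0 T in 𝓝[Ici t] t for t ∈ Ico 0 T
  have hmem : ∀ t ∈ Set.Ico (0:ℝ) T, Set.Icc (0:ℝ) T ∈ nhdsWithin t (Set.Ici t) := by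
    intro t ht
    have h1 : Set.Iic T ∈ nhds t := Iic_mem_nhds ht.2
    have : Set.Ici t ∩ Set.Iic T ⊆ Set.Icc 0 T := fun u hu => ⟨le_trans ht.1 hu.1, hu.2⟩
    exact mem_nhdsWithin_iff_exists_mem_nhds_inter.2
      ⟨Set.Iic T, h1, fun u hu => this ⟨hu.2, hu.1⟩⟩
  -- C has right derivative c t at each t ∈ Ico 0 T
  have hCd : ∀ t ∈ Set.Ico (0:ℝ) T, HasDerivWithinAt C (c t) (Set.Ici t) t := by
    intro t ht
    have hint : IntervalIntegrable c volume 0 t := by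
      apply (hcint.mono_set _).intervalIntegrable
      rw [Set.uIcc_of_le ht.1]
      exact Set.Icc_subset_Icc le_rfl ht.2.le
    have hmem' : Set.Icc (0:ℝ) T ∈ nhdsWithin t (Set.Ioi t) :=
      nhdsWithin_mono t Set.Ioi_subset_Ici_self (hmem t ht)
    have hmeas : StronglyMeasurableAtFilter c (nhdsWithin t (Set.Ioi t)) volume :=
      ⟨Set.Icc 0 T, hmem', hcint.aestronglyMeasurable⟩
    exact integral_hasDerivWithinAt_right (t := Set.Ioi t) hint hmeas
      ((hc t ⟨ht.1, ht.2.le⟩).mono_of_mem_nhdsWithin hmem')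
  have hφcont : ContinuousOn φ (Set.Icc (0:ℝ) T) :=
    fun t ht => (hφ t ht).continuousWithinAt
  set G : ℝ → ℝ := fun t => φ t * Real.exp (-C t) with hG
  have hGcont : ContinuousOn G (Set.Icc (0:ℝ) T) :=
    hφcont.mul (hCcont.neg.rexp)
  have hGd : ∀ t ∈ Set.Ico (0:ℝ) T, HasDerivWithinAt G 0 (Set.Ici t) t := by
    intro t ht
    have ht' : t ∈ Set.Icc (0:ℝ) T := ⟨ht.1, ht.2.le⟩
    have hφd : HasDerivWithinAt φ (c t * φ t) (Set.Ici t) t :=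
      (hφ t ht').mono_of_mem_nhdsWithin (hmem t ht)
    have hEd : HasDerivWithinAt (fun u => Real.exp (-C u))
        (Real.exp (-C t) * (-c t)) (Set.Ici t) t := (hCd t ht).neg.exp
    have : HasDerivWithinAt (fun u => φ u * Real.exp (-C u))
        (c t * φ t * Real.exp (-C t) + φ t * (Real.exp (-C t) * -c t)) (Set.Ici t) t :=
      hφd.fun_mul hEd
    convert this using 1
    ring
  have hconst : ∀ t ∈ Set.Icc (0:ℝ) T, G t = G 0 :=
    constant_of_has_deriv_right_zero hGcont hGd
  intro t ht
  have hG0 : G 0 = φ 0 := by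
    simp [hG, hC, intervalIntegral.integral_same]
  have : φ t = G t * Real.exp (C t) := by
    simp [hG, mul_assoc, ← Real.exp_add]
  rw [this, hconst t ht, hG0]
  exact mul_nonneg h0 (Real.exp_pos _).le

/-- The quasiperiodically forced logistic (Riccati) vector field
`F_β(θ,x) = -b x² + b - (β b/(1 - b^{-1/2})) g(θ)`. -/
noncomputable def Fbeta {D : ℕ} (b β : ℝ)
    (g : (Fin D → AddCircle (1:ℝ)) → ℝ)
    (θ : Fin D → AddCircle (1:ℝ)) (x : ℝ) : ℝ :=
  -b * x ^ 2 + b - (β * b / (1 - (Real.sqrt b)⁻¹)) * g θ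

/-- Proposition 5.1(b): a solution of the driven logistic equation
starting at `x` with `|x| ≤ 1`, whose base orbit avoids the forcing bump
(`g(θ + sρ) = 0` for all `s ∈ [0,T]`), is nondecreasing relative to `x`. -/
theorem driven_logistic_nondecreasing_off_bump
    (D : ℕ) (hD : 2 ≤ D) (b β : ℝ) (hb : 1 < b) (hβ0 : 0 ≤ β) (hβ1 : β ≤ 1)
    (ρ : Fin D → ℝ) (θ : Fin D → AddCircle (1:ℝ)) (T : ℝ) (hT : 0 < T)
    (g : (Fin D → AddCircle (1:ℝ)) → ℝ) (hg : Continuous g)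
    (hg0 : ∀ ϑ, 0 ≤ g ϑ) (hg1 : ∀ ϑ, g ϑ ≤ 1)
    (ξ : ℝ → ℝ) (x : ℝ)
    (hξ : ∀ t ∈ Set.Icc (0:ℝ) T,
      HasDerivWithinAt ξ
        (Fbeta b β g (fun i => θ i + ((t * ρ i : ℝ) : AddCircle (1:ℝ))) (ξ t))
        (Set.Icc (0:ℝ) T) t)
    (hinit : ξ 0 = x) (hx : |x| ≤ 1)
    (hbump : ∀ s ∈ Set.Icc (0:ℝ) T,
      g (fun i => θ i + ((s * ρ i : ℝ) : AddCircle (1:ℝ))) = 0) :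
    ∀ t ∈ Set.Icc (0:ℝ) T, x ≤ ξ t := by
  -- off the bump the equation is ξ' = b (1 - ξ²)
  have hξ' : ∀ t ∈ Set.Icc (0:ℝ) T,
      HasDerivWithinAt ξ (b * (1 - ξ t ^ 2)) (Set.Icc (0:ℝ) T) t := by
    intro t ht
    have h := hξ t ht
    rw [Fbeta, hbump t ht] at h
    convert h using 1; ring
  have hcont : ContinuousOn ξ (Set.Icc (0:ℝ) T) :=
    fun t ht => (hξ' t ht).continuousWithinAt
  obtain ⟨hx1, hx2⟩ := abs_le.mp hx
  -- 1 - ξ keeps its sign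
  have hupper : ∀ t ∈ Set.Icc (0:ℝ) T, ξ t ≤ 1 := by
    have key : ∀ t ∈ Set.Icc (0:ℝ) T, HasDerivWithinAt (fun u => 1 - ξ u)
        ((fun u => -(b * (1 + ξ u))) t * ((fun u => 1 - ξ u) t)) (Set.Icc (0:ℝ) T) t := by
      intro t ht
      have h := (hξ' t ht).const_sub (1:ℝ)
      have he : (fun u => -(b * (1 + ξ u))) t * ((fun u => 1 - ξ u) t)
          = -(b * (1 - ξ t ^ 2)) := by simp only []; ring
      rw [he]; exact h
    have hccont : ContinuousOn (fun u => -(b * (1 + ξ u))) (Set.Icc (0:ℝ) T) :=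
      (continuousOn_const.mul (continuousOn_const.add hcont)).neg
    have h0 : (0:ℝ) ≤ (fun u => 1 - ξ u) 0 := by
      show (0:ℝ) ≤ 1 - ξ 0; rw [hinit]; linarith
    have := sign_preserved_aux hT key hccont h0
    intro t ht; have := this t ht; linarith
  have hlower : ∀ t ∈ Set.Icc (0:ℝ) T, -1 ≤ ξ t := by
    have key : ∀ t ∈ Set.Icc (0:ℝ) T, HasDerivWithinAt (fun u => 1 + ξ u)
        ((fun u => b * (1 - ξ u)) t * ((fun u => 1 + ξ u) t)) (Set.Icc (0:ℝ) T) t := by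
      intro t ht
      have h := (hξ' t ht).const_add (1:ℝ)
      have he : (fun u => b * (1 - ξ u)) t * ((fun u => 1 + ξ u) t)
          = b * (1 - ξ t ^ 2) := by simp only []; ring
      rw [he]; exact h
    have hccont : ContinuousOn (fun u => b * (1 - ξ u)) (Set.Icc (0:ℝ) T) :=
      continuousOn_const.mul (continuousOn_const.sub hcont)
    have h0 : (0:ℝ) ≤ (fun u => 1 + ξ u) 0 := by
      show (0:ℝ) ≤ 1 + ξ 0; rw [hinit]; linarith
    have := sign_preserved_aux hT key hccont h0
    intro t ht; have := this t ht; linarith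
  -- hence the derivative is nonnegative and ξ is monotone
  have hmono : MonotoneOn ξ (Set.Icc (0:ℝ) T) := by
    apply monotoneOn_of_deriv_nonneg (convex_Icc 0 T) hcont
    · intro t ht
      rw [interior_Icc] at ht
      exact (((hξ' t (Set.Ioo_subset_Icc_self ht)).hasDerivAt
        (Icc_mem_nhds ht.1 ht.2)).differentiableAt).differentiableWithinAt
    · intro t ht
      rw [interior_Icc] at ht
      have ht' : t ∈ Set.Icc (0:ℝ) T := Set.Ioo_subset_Icc_self ht
      have hd : HasDerivAt ξ (b * (1 - ξ t ^ 2)) t :=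
        (hξ' t ht').hasDerivAt (Icc_mem_nhds ht.1 ht.2)
      rw [hd.deriv]
      have h1 := hupper t ht'
      have h2 := hlower t ht'
      nlinarith [mul_nonneg (by linarith : (0:ℝ) ≤ 1 - ξ t)
        (by linarith : (0:ℝ) ≤ 1 + ξ t), hb.le]
  intro t ht
  calc x = ξ 0 := hinit.symm
    _ ≤ ξ t := hmono (Set.left_mem_Icc.2 hT.le) ht ht.1
end

section
/- For every c ∈ (0, 1/4) and every t₀ ∈ ℝ there exists b₀ > 1 such that for every b ≥ b₀ there exists β ∈ (0,1) with κ := β/(2b^{1/2} - 2) + β - 1 > 0 for which the function y(t) = -√κ · tan( b√κ (t - t₀) + α ), with α = arctan( -(1+c)/√κ ), is well defined on [t₀, t₀ + b^{-1/2}] (i.e. the argument of tan stays in (-π/2, π/2) there), satisfies y(t₀) = 1 + c and y'(t) = -b y(t)² - b κ for all t ∈ [t₀, t₀ + b^{-1/2}], and satisfies y(t₀ + b^{-1/2}) < -1. Moreover, any differentiable ξ : [t₀, t₀ + b^{-1/2}] → ℝ with ξ(t₀) = 1 + c and ξ'(t) ≤ -b ξ(t)² - b κ for all t satisfies ξ(t₀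 + b^{-1/2}) < -1. (Key computation in Claim 5.2: for large b the forced Riccati flow can cross from above 1 to below -1 within one passage through the forcing bump.) -/
open Real

lemma my_arctan_le_self {x : ℝ} (hx : 0 ≤ x) : Real.arctan x ≤ x := by
  have h : Monotone (fun x : ℝ => x - Real.arctan x) := by
    have hd : ∀ x : ℝ, HasDerivAt (fun x : ℝ => x - Real.arctan x) (1 - 1 / (1 + x ^ 2)) x :=
      fun x => (hasDerivAt_id x).sub (Real.hasDerivAt_arctan x)
    apply monotone_of_deriv_nonneg (fun x => (hd x).differentiableAt)
    intro x
    rw [(hd x).deriv]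
    have h1 : (0:ℝ) < 1 + x ^ 2 := by positivity
    rw [sub_nonneg, div_le_one h1]
    nlinarith
  have := h hx
  simpa [Real.arctan_zero] using this

lemma my_arctan_cubic {x : ℝ} (hx : 0 ≤ x) : x - x ^ 3 / 3 ≤ Real.arctan x := by
  have h : Monotone (fun x : ℝ => Real.arctan x - (x - x ^ 3 / 3)) := by
    have hd : ∀ x : ℝ, HasDerivAt (fun x : ℝ => Real.arctan x - (x - x ^ 3 / 3))
        (1 / (1 + x ^ 2) - (1 - 3 * x ^ 2 / 3)) x := by
      intro x
      exact (Real.hasDerivAt_arctan x).sub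
        ((hasDerivAt_id x).sub (((hasDerivAt_pow 3 x)).div_const 3))
    apply monotone_of_deriv_nonneg (fun x => (hd x).differentiableAt)
    intro x
    rw [(hd x).deriv]
    have h1 : (0:ℝ) < 1 + x ^ 2 := by positivity
    have h2 : 1 - x ^ 2 ≤ 1 / (1 + x ^ 2) := by
      rw [le_div_iff₀ h1]; nlinarith
    have h3 : (3:ℝ) * x ^ 2 / 3 = x ^ 2 := by ring
    rw [h3]
    linarith
  have := h hx
  simpa [Real.arctan_zero] using this

lemma my_quad_step {b Y P M' : ℝ} (hb : 0 < b) (hP : 0 < P) (hM : 0 < M')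
    (hY : -(M' - 1) ≤ Y) :
    -b * (Y + P) ^ 2 < -b * Y ^ 2 + P * (4 * b * M') := by
  nlinarith [mul_nonneg (mul_pos hb hP).le (show (0:ℝ) ≤ Y + (M' - 1) by linarith),
    mul_pos (mul_pos hb hP) hM, mul_pos hb hP, mul_nonneg hb.le (sq_nonneg P)]

set_option maxHeartbeats 1000000 in
/-- key computation in Claim 5.2: for large `b` there is `β ∈ (0,1)` with
`κ = β/(2√b - 2) + β - 1 > 0` such that the explicit tangent comparison solution
`y(t) = -√κ tan(b√κ(t - t₀) + α)`, `α = arctan(-(1+c)/√κ)`, is defined on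
`[t₀, t₀ + b^{-1/2}]`, starts at `1 + c`, solves `y' = -by² - bκ`, and ends below `-1`;
moreover every differentiable `ξ` with `ξ(t₀) = 1 + c` and `ξ' ≤ -bξ² - bκ` ends below `-1`. -/
theorem riccati_tan_comparison_crossing
    (c t₀ : ℝ) (hc0 : 0 < c) (hc : c < 1 / 4) :
    ∃ b₀ : ℝ, 1 < b₀ ∧ ∀ b ≥ b₀, ∃ β : ℝ, 0 < β ∧ β < 1 ∧
      let κ : ℝ := β / (2 * Real.sqrt b - 2) + β - 1
      let α : ℝ := Real.arctan (-(1 + c) / Real.sqrt κ)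
      let y : ℝ → ℝ := fun t => -Real.sqrt κ * Real.tan (b * Real.sqrt κ * (t - t₀) + α)
      0 < κ
      ∧ (∀ t ∈ Set.Icc t₀ (t₀ + (Real.sqrt b)⁻¹),
          b * Real.sqrt κ * (t - t₀) + α ∈ Set.Ioo (-(Real.pi / 2)) (Real.pi / 2))
      ∧ y t₀ = 1 + c
      ∧ (∀ t ∈ Set.Icc t₀ (t₀ + (Real.sqrt b)⁻¹),
          HasDerivAt y (-b * (y t) ^ 2 - b * κ) t)
      ∧ y (t₀ + (Real.sqrt b)⁻¹) < -1
      ∧ ∀ ξ ξ' : ℝ → ℝ,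
          (∀ t ∈ Set.Icc t₀ (t₀ + (Real.sqrt b)⁻¹),
            HasDerivWithinAt ξ (ξ' t) (Set.Icc t₀ (t₀ + (Real.sqrt b)⁻¹)) t) →
          (∀ t ∈ Set.Icc t₀ (t₀ + (Real.sqrt b)⁻¹),
            ξ' t ≤ -b * (ξ t) ^ 2 - b * κ) →
          ξ t₀ = 1 + c →
          ξ (t₀ + (Real.sqrt b)⁻¹) < -1 := by
  refine ⟨400, by norm_num, ?_⟩
  intro b hb
  have hb4 : (400:ℝ) ≤ b := hb
  have hb0 : (0:ℝ) < b := by linarith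
  set r := Real.sqrt b with hrdef
  have hr : (20:ℝ) ≤ r := by
    have h1 : Real.sqrt 400 ≤ Real.sqrt b := Real.sqrt_le_sqrt hb4
    have h2 : Real.sqrt 400 = 20 := by
      rw [show (400:ℝ) = 20 ^ 2 by norm_num, Real.sqrt_sq (by norm_num : (0:ℝ) ≤ 20)]
    rw [hrdef, ← h2]; exact h1
  have hr0 : (0:ℝ) < r := by linarith
  have hbr : b = r * r := (Real.mul_self_sqrt hb0.le).symm
  have hpi : Real.pi < 3.15 := Real.pi_lt_d2
  have hpi0 : 0 < Real.pi := Real.pi_pos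
  set s : ℝ := Real.pi / (r + 6/5) with hsdef
  have hs0 : 0 < s := by
    rw [hsdef]; positivity
  have hs : s < 0.15 := by
    rw [hsdef, div_lt_iff₀ (by linarith)]; nlinarith
  have hd1 : (2:ℝ) * r - 2 ≠ 0 := by intro h; nlinarith
  have hd2 : (2:ℝ) * r - 1 ≠ 0 := by intro h; nlinarith
  set β : ℝ := (s^2 + 1) * (2*r - 2) / (2*r - 1) with hβdef
  have hβ0 : 0 < β := by
    rw [hβdef]; apply div_pos (by nlinarith) (by nlinarith)
  have hβ1 : β < 1 := by
    rw [hβdef, div_lt_one (by nlinarith)]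
    have hsr : s < Real.pi / r := by
      rw [hsdef, div_lt_div_iff₀ (by linarith) hr0]; nlinarith
    have hs2 : s^2 * (2*r) < 1 := by
      have h1 : s^2 < (Real.pi / r)^2 := by nlinarith
      have h2 : (Real.pi / r)^2 * (2*r) = 2 * Real.pi^2 / r := by field_simp
      have h3 : 2 * Real.pi^2 / r < 1 := by
        rw [div_lt_one hr0]; nlinarith
      nlinarith [sq_nonneg (Real.pi / r)]
    nlinarith
  refine ⟨β, hβ0, hβ1, ?_⟩
  intro κ α y
  have hκ : κ = s ^ 2 := by
    show β / (2 * r - 2) + β - 1 = s ^ 2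
    rw [hβdef]
    have hd3 : r - 1 ≠ 0 := by intro h; nlinarith
    field_simp
    ring
  have hκ0 : 0 < κ := by rw [hκ]; positivity
  have hsq : Real.sqrt κ = s := by rw [hκ, Real.sqrt_sq hs0.le]
  have hc1 : (0:ℝ) < 1 + c := by linarith
  set A := Real.arctan (s / (1+c)) with hAdef
  have hA0 : 0 < A := by
    have := Real.arctan_strictMono (show (0:ℝ) < s/(1+c) by positivity)
    rwa [Real.arctan_zero] at this
  have hAle : A ≤ s / (1+c) := my_arctan_le_self (by positivity)
  have hAcub : s/(1+c) - (s/(1+c))^3/3 ≤ A := my_arctan_cubic (by positivity)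
  set T := Real.arctan s with hTdef
  have hTcub : s - s^3/3 ≤ T := my_arctan_cubic hs0.le
  have hα : α = A - Real.pi/2 := by
    show Real.arctan (-(1+c)/Real.sqrt κ) = A - Real.pi/2
    rw [hsq, show -(1+c)/s = -((1+c)/s) by ring, Real.arctan_neg,
      show (1+c)/s = (s/(1+c))⁻¹ by rw [inv_div],
      Real.arctan_inv_of_pos (by positivity : (0:ℝ) < s/(1+c))]
    rw [hAdef]; ring
  -- numeric inequalities
  have hA65 : A < 6/5 * s := by
    have : s / (1+c) < 6/5 * s := by
      rw [div_lt_iff₀ hc1]; nlinarith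
    linarith
  have hAT : 6/5 * s < A + T := by
    have hu : (4:ℝ)/5 * s < s/(1+c) := by
      rw [lt_div_iff₀ hc1]; nlinarith
    have hu2 : s/(1+c) ≤ s := by
      rw [div_le_iff₀ hc1]; nlinarith
    have hcube : (s/(1+c))^3 ≤ s^3 := by
      apply pow_le_pow_left₀ (by positivity) hu2
    have hs2' : s^2 ≤ 0.0225 := by nlinarith
    have hs3 : s^3 ≤ 0.0225 * s := by
      have := mul_le_mul_of_nonneg_right hs2' hs0.le
      calc s^3 = s^2 * s := by ring
        _ ≤ 0.0225 * s := this
    linarith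
  have hbs : 0 < b * s := by positivity
  have hrs : b * s * r⁻¹ = Real.pi - 6/5 * s := by
    rw [hbr, hsdef]
    field_simp
    ring
  -- range of the tangent argument
  have hrange : ∀ t ∈ Set.Icc t₀ (t₀ + r⁻¹),
      b * Real.sqrt κ * (t - t₀) + α ∈ Set.Ioo (-(Real.pi / 2)) (Real.pi / 2) := by
    intro t ht
    rw [hsq, hα]
    obtain ⟨ht1, ht2⟩ := ht
    have h1 : 0 ≤ b * s * (t - t₀) := by
      apply mul_nonneg hbs.le; linarith
    have h2 : b * s * (t - t₀) ≤ b * s * r⁻¹ := by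
      apply mul_le_mul_of_nonneg_left _ hbs.le
      linarith
    rw [hrs] at h2
    constructor
    · linarith
    · linarith
  -- initial value
  have htanα : Real.tan α = -(1+c)/s := by
    show Real.tan (Real.arctan (-(1+c)/Real.sqrt κ)) = -(1+c)/s
    rw [Real.tan_arctan, hsq]
  have hy0 : y t₀ = 1 + c := by
    show -Real.sqrt κ * Real.tan (b * Real.sqrt κ * (t₀ - t₀) + α) = 1 + c
    rw [sub_self, mul_zero, zero_add, htanα, hsq]
    field_simp
  -- derivative
  have hyderiv : ∀ t ∈ Set.Icc t₀ (t₀ + r⁻¹),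
      HasDerivAt y (-b * (y t) ^ 2 - b * κ) t := by
    intro t ht
    have hmem := hrange t ht
    set θ := b * Real.sqrt κ * (t - t₀) + α with hθdef
    have hcosθ : Real.cos θ ≠ 0 := (Real.cos_pos_of_mem_Ioo hmem).ne'
    have h1 : HasDerivAt (fun u => b * Real.sqrt κ * (u - t₀) + α) (b * Real.sqrt κ) t := by
      simpa using (((hasDerivAt_id t).sub_const t₀).const_mul (b * Real.sqrt κ)).add_const α
    have h2 := (Real.hasDerivAt_tan hcosθ).comp t h1
    have h3 : HasDerivAt y (-Real.sqrt κ * (1 / Real.cos θ ^ 2 * (b * Real.sqrt κ))) t :=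
      h2.const_mul (-Real.sqrt κ)
    have hyt : y t = -s * Real.tan θ := by
      show -Real.sqrt κ * Real.tan θ = -s * Real.tan θ
      rw [hsq]
    have h4 : 1 / Real.cos θ ^ 2 = 1 + Real.tan θ ^ 2 := by
      rw [one_div, ← Real.inv_one_add_tan_sq hcosθ, inv_inv]
    have hval : -Real.sqrt κ * (1 / Real.cos θ ^ 2 * (b * Real.sqrt κ))
        = -b * (y t) ^ 2 - b * κ := by
      rw [hyt, h4, hsq, hκ]; ring
    rwa [hval] at h3
  -- endpoint value
  have harg : b * Real.sqrt κ * (t₀ + r⁻¹ - t₀) + α = Real.pi/2 + A - 6/5 * s := by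
    rw [hsq, hα, show t₀ + r⁻¹ - t₀ = r⁻¹ by ring, hrs]; ring
  have hy1 : y (t₀ + r⁻¹) < -1 := by
    show -Real.sqrt κ * Real.tan (b * Real.sqrt κ * (t₀ + r⁻¹ - t₀) + α) < -1
    rw [harg, hsq]
    have harcinv : Real.arctan s⁻¹ = Real.pi/2 - T := Real.arctan_inv_of_pos hs0
    have htan : Real.tan (Real.arctan s⁻¹) < Real.tan (Real.pi/2 + A - 6/5 * s) := by
      apply Real.tan_lt_tan_of_lt_of_lt_pi_div_two (Real.neg_pi_div_two_lt_arctan _)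
      · linarith
      · rw [harcinv]; linarith
    rw [Real.tan_arctan] at htan
    have : 1 < s * Real.tan (Real.pi/2 + A - 6/5 * s) := by
      have := mul_lt_mul_of_pos_left htan hs0
      rwa [mul_inv_cancel₀ hs0.ne'] at this
    linarith
  refine ⟨hκ0, hrange, hy0, hyderiv, hy1, ?_⟩
  -- comparison part
  intro ξ ξ' hderiv hbound hξ0
  set t₁ := t₀ + r⁻¹ with ht₁def
  have ht01 : t₀ ≤ t₁ := by
    rw [ht₁def]; have : (0:ℝ) < r⁻¹ := by positivity
    linarith
  have hycont : ContinuousOn y (Set.Icc t₀ t₁) :=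
    fun t ht => ((hyderiv t ht).continuousAt).continuousWithinAt
  obtain ⟨M, hM⟩ := isCompact_Icc.exists_bound_of_continuousOn hycont
  set M' : ℝ := |M| + 1 with hM'def
  have hM'0 : 0 < M' := by positivity
  have hyM : ∀ t ∈ Set.Icc t₀ t₁, |y t| ≤ M' - 1 := by
    intro t ht
    have := hM t ht
    rw [Real.norm_eq_abs] at this
    have : |y t| ≤ |M| := le_trans this (le_abs_self M)
    linarith
  set L : ℝ := 4 * b * M' with hLdef
  have hξcont : ContinuousOn ξ (Set.Icc t₀ t₁) :=
    fun t ht => (hderiv t ht).continuousWithinAt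
  have key : ∀ ε > 0, ξ t₁ ≤ y t₁ + ε * Real.exp (L * (t₁ - t₀)) := by
    intro ε hε
    have main : ∀ x ∈ Set.Icc t₀ t₁, ξ x ≤ y x + ε * Real.exp (L * (x - t₀)) := by
      apply image_le_of_deriv_right_lt_deriv_boundary' hξcont
        (fun x hx => (hderiv x (Set.Ico_subset_Icc_self hx)).mono_of_mem_nhdsWithin
          (Icc_mem_nhdsGE_of_mem hx))
        (B' := fun x => (-b * (y x) ^ 2 - b * κ) + ε * (Real.exp (L * (x - t₀)) * L))
      · rw [hξ0, hy0, sub_self, mul_zero, Real.exp_zero, mul_one]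
        linarith
      · apply hycont.add
        exact (continuous_const.mul (Real.continuous_exp.comp
          (continuous_const.mul (continuous_id.sub continuous_const)))).continuousOn
      · intro x hx
        have hxIcc : x ∈ Set.Icc t₀ t₁ := Set.Ico_subset_Icc_self hx
        have hEder : HasDerivAt (fun u : ℝ => ε * Real.exp (L * (u - t₀)))
            (ε * (Real.exp (L * (x - t₀)) * L)) x := by
          simpa using (((((hasDerivAt_id x).sub_const t₀).const_mul L).exp).const_mul ε)
        exact ((hyderiv x hxIcc).add hEder).hasDerivWithinAt
      · intro x hx hxeq
        have hxIcc : x ∈ Set.Icc t₀ t₁ := Set.Ico_subset_Icc_self hx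
        have hE : 0 < Real.exp (L * (x - t₀)) := Real.exp_pos _
        have hεE : 0 < ε * Real.exp (L * (x - t₀)) := by positivity
        have hyb := hyM x hxIcc
        have hyb1 : -(M' - 1) ≤ y x := neg_le_of_abs_le hyb
        have hyb2 : y x ≤ M' - 1 := le_of_abs_le hyb
        have h1 : ξ' x ≤ -b * (ξ x) ^ 2 - b * κ := hbound x hxIcc
        rw [hxeq] at h1
        have hstep := my_quad_step hb0 hεE hM'0 hyb1
        have hL : ε * (Real.exp (L * (x - t₀)) * L)
            = (ε * Real.exp (L * (x - t₀))) * (4 * b * M') := by rw [hLdef]; ring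
        calc ξ' x ≤ -b * (y x + ε * Real.exp (L * (x - t₀))) ^ 2 - b * κ := h1
          _ < -b * (y x) ^ 2 - b * κ + ε * (Real.exp (L * (x - t₀)) * L) := by
              linarith [hstep, hL]
    exact main t₁ ⟨ht01, le_refl _⟩
  have hle : ξ t₁ ≤ y t₁ := by
    apply le_of_forall_pos_le_add
    intro ε hε
    have hE1 : 0 < Real.exp (L * (t₁ - t₀)) := Real.exp_pos _
    have := key (ε / Real.exp (L * (t₁ - t₀))) (by positivity)
    rwa [div_mul_cancel₀ _ hE1.ne'] at this
  calc ξ t₁ ≤ y t₁ := hle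
    _ < -1 := hy1
end

section
/- For every c ∈ (0,1) and every ρ_D > 0 there exists b₀ > 0 such that for all b ≥ b₀ the following holds: every differentiable ξ : [0, 1/ρ_D] → ℝ satisfying ξ'(t) = -b ξ(t)² + b for all t ∈ [0, 1/ρ_D] and ξ(0) = -1 + exp(-b/(2ρ_D)) satisfies ξ(1/ρ_D) > 1 - c. (Claim in Section 5: an orbit starting just above the repelling level -1 and not meeting the forcing bump returns above the contracting level 1 - c within one return time; the proof identifies ξ(t) = tanh(b t + artanh(-1 + exp(-b/(2ρ_D)))).) -/
open Set intervalIntegral Real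

/-- Constancy on `Icc` from vanishing derivative within `Icc`. -/
lemma const_of_hasDerivWithinAt_zero {f : ℝ → ℝ} {a b : ℝ}
    (hcont : ContinuousOn f (Icc a b))
    (hderiv : ∀ x ∈ Icc a b, HasDerivWithinAt f 0 (Icc a b) x) :
    ∀ x ∈ Icc a b, f x = f a := by
  apply constant_of_has_deriv_right_zero hcont
  intro x hx
  exact (hderiv x ⟨hx.1, hx.2.le⟩).mono_of_mem_nhdsWithin (Icc_mem_nhdsGE_of_mem hx)

set_option maxHeartbeats 1000000 in
/-- claim in Section 5: for large `b`, a solution of the unforced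
logistic equation `ξ' = -bξ² + b` starting at `-1 + exp(-b/(2ρ_D))` exceeds `1 - c`
at time `1/ρ_D`. -/
theorem unforced_logistic_recovers_above_contracting_level
    (c ρD : ℝ) (hc0 : 0 < c) (hc1 : c < 1) (hρ : 0 < ρD) :
    ∃ b₀ : ℝ, 0 < b₀ ∧ ∀ b ≥ b₀, ∀ ξ : ℝ → ℝ,
      (∀ t ∈ Set.Icc (0:ℝ) (1 / ρD),
        HasDerivWithinAt ξ (-b * (ξ t) ^ 2 + b) (Set.Icc (0:ℝ) (1 / ρD)) t) →
      ξ 0 = -1 + Real.exp (-b / (2 * ρD)) →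
      1 - c < ξ (1 / ρD) := by
  set T : ℝ := 1 / ρD with hT
  have hT0 : 0 < T := by positivity
  have hlog : 0 < Real.log (4 / c) := by
    apply Real.log_pos
    rw [lt_div_iff₀ hc0]
    linarith
  refine ⟨(2 * ρD / 3) * Real.log (4 / c) + ρD, by positivity, ?_⟩
  intro b hb ξ hderiv hinit
  have hb0 : 0 < b := lt_of_lt_of_le (by positivity) hb
  -- clamp function
  set p : ℝ → ℝ := fun t => max 0 (min t T) with hp
  have hpmem : ∀ t, p t ∈ Icc (0:ℝ) T := fun t =>
    ⟨le_max_left _ _, max_le (le_of_lt hT0) (min_le_right _ _)⟩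
  have hpeq : ∀ t ∈ Icc (0:ℝ) T, p t = t := fun t ht => by
    simp [hp, min_eq_left ht.2, max_eq_right ht.1]
  have hcont : ContinuousOn ξ (Icc (0:ℝ) T) := fun t ht =>
    (hderiv t ht).continuousWithinAt
  -- globally continuous extension
  set g : ℝ → ℝ := fun t => ξ (p t) with hg
  have hgc : Continuous g := by
    apply hcont.comp_continuous
    · exact continuous_const.max (continuous_id.min continuous_const)
    · exact hpmem
  have hgeq : ∀ t ∈ Icc (0:ℝ) T, g t = ξ t := fun t ht => by rw [hg]; simp [hpeq t ht]
  -- antiderivative of ξ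
  set P : ℝ → ℝ := fun t => ∫ s in (0:ℝ)..t, g s with hP
  have hPd : ∀ t : ℝ, HasDerivAt P (g t) t := fun t =>
    (hgc.integral_hasStrictDerivAt 0 t).hasDerivAt
  have hP0 : P 0 = 0 := intervalIntegral.integral_same
  -- the two conserved quantities
  have key : ∀ (σ : ℝ), σ = 1 ∨ σ = -1 →
      (1 - σ * ξ T) * Real.exp (σ * (b * T) + b * P T) = 1 - σ * ξ 0 := by
    intro σ hσ
    set F : ℝ → ℝ := fun t => (1 - σ * ξ t) * Real.exp (σ * (b * t) + b * P t) with hF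
    have hσ2 : σ ^ 2 = 1 := by rcases hσ with h | h <;> rw [h] <;> ring
    have hFd : ∀ t ∈ Icc (0:ℝ) T, HasDerivWithinAt F 0 (Icc (0:ℝ) T) t := by
      intro t ht
      have h1 : HasDerivWithinAt (fun s => 1 - σ * ξ s) (-(σ * (-b * (ξ t) ^ 2 + b)))
          (Icc (0:ℝ) T) t := ((hderiv t ht).const_mul σ).const_sub 1
      have h2 : HasDerivWithinAt (fun s => σ * (b * s) + b * P s)
          (σ * b + b * ξ t) (Icc (0:ℝ) T) t := by
        have := (((hPd t).hasDerivWithinAt (s := Icc (0:ℝ) T)).const_mul b).add_const 0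
        have h3 : HasDerivWithinAt (fun s => σ * (b * s)) (σ * b) (Icc (0:ℝ) T) t := by
          have := (hasDerivWithinAt_id t (Icc (0:ℝ) T)).const_mul (σ * b)
          simpa [mul_assoc] using this
        have h4 : HasDerivWithinAt (fun s => b * P s) (b * ξ t) (Icc (0:ℝ) T) t := by
          have := ((hPd t).hasDerivWithinAt (s := Icc (0:ℝ) T)).const_mul b
          rwa [hgeq t ht] at this
        exact h3.add h4
      have := h1.mul h2.exp
      have heq : -(σ * (-b * ξ t ^ 2 + b)) * Real.exp (σ * (b * t) + b * P t) +
          (1 - σ * ξ t) * (Real.exp (σ * (b * t) + b * P t) * (σ * b + b * ξ t)) = 0 := by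
        rcases hσ with h | h <;> subst h <;> ring
      rwa [heq] at this
    have hFc : ContinuousOn F (Icc (0:ℝ) T) := fun t ht => (hFd t ht).continuousWithinAt
    have := const_of_hasDerivWithinAt_zero hFc hFd T ⟨le_of_lt hT0, le_rfl⟩
    rw [hF] at this
    simp only [hP0] at this
    simpa using this
  have eq1 := key 1 (Or.inl rfl)
  have eq2 := key (-1) (Or.inr rfl)
  simp only [one_mul, neg_one_mul, sub_neg_eq_add] at eq1 eq2
  -- notation
  set A : ℝ := Real.exp (b * T) with hA
  set Ei : ℝ := Real.exp (b * P T) with hEi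
  have hA0 : 0 < A := Real.exp_pos _
  have hEi0 : 0 < Ei := Real.exp_pos _
  set ε : ℝ := Real.exp (-b / (2 * ρD)) with hε
  have hε0 : 0 < ε := Real.exp_pos _
  have hε1 : ε < 1 := by
    rw [hε, Real.exp_lt_one_iff]
    exact div_neg_of_neg_of_pos (by linarith) (by positivity)
  have heq1 : (1 - ξ T) * (A * Ei) = 2 - ε := by
    have h : Real.exp (b * T + b * P T) = A * Ei := by
      rw [hA, hEi, ← Real.exp_add]
    rw [h, hinit] at eq1
    linarith
  have heq2 : (1 + ξ T) * Ei = ε * A := by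
    have h : Real.exp (-(b * T) + b * P T) = Ei / A := by
      rw [hA, hEi, ← Real.exp_sub]; ring_nf
    rw [h, hinit] at eq2
    have h2 : (1 + ξ T) * (Ei / A) = ε := by linarith
    field_simp at h2
    linarith
  -- lower bound for Ei : 2 Ei = (2-ε)/A + ε A ≥ ε A
  have hsum : 2 * Ei = (2 - ε) / A + ε * A := by
    have h1 : 1 - ξ T = (2 - ε) / (A * Ei) := by
      field_simp at heq1 ⊢; linarith
    have h2 : 1 + ξ T = ε * A / Ei := by
      field_simp at heq2 ⊢; linarith
    have : (1 - ξ T) + (1 + ξ T) = 2 := by ring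
    rw [h1, h2] at this
    field_simp at this
    field_simp
    nlinarith
  have hεlt2 : 2 - ε > 0 := by linarith
  have hEilb : ε * A / 2 ≤ Ei := by nlinarith [div_pos hεlt2 hA0]
  -- main bound : 1 - ξ T = (2-ε)/(A·Ei) ≤ 4/(ε A²)
  have hξT : 1 - ξ T = (2 - ε) / (A * Ei) := by
    field_simp at heq1 ⊢; linarith
  have hbound : 1 - ξ T ≤ 4 / (ε * A ^ 2) := by
    rw [hξT]
    rw [div_le_div_iff₀ (by positivity) (by positivity)]
    have hεA2 : 0 < ε * A ^ 2 := by positivity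
    have h1 : A * (ε * A / 2) ≤ A * Ei := mul_le_mul_of_nonneg_left hEilb hA0.le
    nlinarith [mul_le_mul_of_nonneg_right (show 2 - ε ≤ 2 by linarith) hεA2.le]
  -- arithmetic : 4/(ε A²) = 4 exp(-3bT/2) < c
  have hεA : ε * A ^ 2 = Real.exp (3 * b * T / 2) := by
    rw [hε, hA, sq, ← Real.exp_add, ← Real.exp_add]
    congr 1
    rw [hT]
    field_simp
    ring
  have hfinal : 4 / (ε * A ^ 2) < c := by
    rw [hεA, div_lt_iff₀ (Real.exp_pos _)]
    have h3 : Real.log (4 / c) < 3 * b * T / 2 := by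
      have hbb : (2 * ρD / 3) * Real.log (4 / c) + ρD ≤ b := hb
      have hTρ : T = 1 / ρD := hT
      rw [hTρ]
      have : 3 * b * (1 / ρD) / 2 = 3 * b / (2 * ρD) := by field_simp
      rw [this]
      rw [lt_div_iff₀ (by positivity)]
      nlinarith
    have := Real.exp_lt_exp.mpr h3
    rw [Real.exp_log (by positivity)] at this
    calc (4:ℝ) = c * (4 / c) := by field_simp
      _ < c * Real.exp (3 * b * T / 2) := mul_lt_mul_of_pos_left this hc0
  linarith [lt_of_le_of_lt hbound hfinal]
end

section
/- Let b > 0, c ∈ (0,1), T > 0 and 0 < δ₁ < T. Let a : [0,T] → ℝ be continuous and let ξ, ζ : [0,T] → ℝ be differentiable solutions of the same equation u'(t) = -b u(t)² + b - a(t). Assume ξ(s) ≥ 1 - c and ζ(s) ≥ 1 - c for all s ∈ [0, T - δ₁], and ξ(s) ≥ -2 and ζ(s) ≥ -2 for all s ∈ [0,T]. Then |ξ(T) - ζ(T)| ≤ exp( -2b(1-c)(T - δ₁) + 4bδ₁ ) · |ξ(0) - ζ(0)|. (Two-solution form of the contraction estimate in Proposition 5.3(a): the difference w = ξ - ζ satisfies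 w' = -b(ξ + ζ)w, whence |w(T)| = |w(0)| exp(-b ∫₀^T (ξ + ζ)).) -/
open Set intervalIntegral

/-- two-solution form of the contraction estimate, Proposition 5.3(a):
two solutions of the same driven Riccati equation staying above `1 - c` until time
`T - δ₁` and above `-2` throughout contract at rate
`exp(-2b(1-c)(T-δ₁) + 4bδ₁)` over `[0, T]`. -/
theorem riccati_two_solution_contraction
    (b c T δ₁ : ℝ) (hb : 0 < b) (hc0 : 0 < c) (hc1 : c < 1)
    (hT : 0 < T) (hδ0 : 0 < δ₁) (hδT : δ₁ < T)
    (a ξ ζ : ℝ → ℝ) (ha : ContinuousOn a (Set.Icc 0 T))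
    (hξ : ∀ t ∈ Set.Icc (0:ℝ) T,
      HasDerivWithinAt ξ (-b * (ξ t) ^ 2 + b - a t) (Set.Icc (0:ℝ) T) t)
    (hζ : ∀ t ∈ Set.Icc (0:ℝ) T,
      HasDerivWithinAt ζ (-b * (ζ t) ^ 2 + b - a t) (Set.Icc (0:ℝ) T) t)
    (hξ1 : ∀ s ∈ Set.Icc (0:ℝ) (T - δ₁), 1 - c ≤ ξ s)
    (hζ1 : ∀ s ∈ Set.Icc (0:ℝ) (T - δ₁), 1 - c ≤ ζ s)
    (hξ2 : ∀ s ∈ Set.Icc (0:ℝ) T, -2 ≤ ξ s)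
    (hζ2 : ∀ s ∈ Set.Icc (0:ℝ) T, -2 ≤ ζ s) :
    |ξ T - ζ T| ≤ Real.exp (-2 * b * (1 - c) * (T - δ₁) + 4 * b * δ₁) * |ξ 0 - ζ 0| := by
  have hTle : (0:ℝ) ≤ T := hT.le
  -- continuity of ξ, ζ on Icc
  have hξc : ContinuousOn ξ (Icc 0 T) := fun t ht => (hξ t ht).continuousWithinAt
  have hζc : ContinuousOn ζ (Icc 0 T) := fun t ht => (hζ t ht).continuousWithinAt
  -- the sum, extended continuously to ℝ
  set g : ℝ → ℝ := fun s => ξ s + ζ s with hg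
  have hgc : ContinuousOn g (Icc 0 T) := hξc.add hζc
  set h : ℝ → ℝ := IccExtend hTle ((Icc (0:ℝ) T).restrict g) with hh
  have hhc : Continuous h := Continuous.Icc_extend' (continuousOn_iff_continuous_restrict.mp hgc)
  have hhg : ∀ s ∈ Icc (0:ℝ) T, h s = g s := by
    intro s hs
    simp [hh, IccExtend_of_mem hTle _ hs]
    rfl
  -- primitive
  set F : ℝ → ℝ := fun t => ∫ s in (0:ℝ)..t, h s with hF
  have hFd : ∀ t : ℝ, HasDerivAt F (h t) t := fun t =>
    (hhc.integral_hasStrictDerivAt 0 t).hasDerivAt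
  -- E = (ξ - ζ) * exp (b * F) has zero derivative on Icc
  set E : ℝ → ℝ := fun t => (ξ t - ζ t) * Real.exp (b * F t) with hE
  have hEd : ∀ t ∈ Icc (0:ℝ) T, HasDerivWithinAt E 0 (Icc 0 T) t := by
    intro t ht
    have hw : HasDerivWithinAt (fun s => ξ s - ζ s)
        (-b * (ξ t + ζ t) * (ξ t - ζ t)) (Icc 0 T) t := by
      have := (hξ t ht).sub (hζ t ht)
      exact this.congr_deriv (by ring)
    have hFt : HasDerivWithinAt (fun s => Real.exp (b * F s))
        (b * (ξ t + ζ t) * Real.exp (b * F t)) (Icc 0 T) t := by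
      have h1 : HasDerivWithinAt (fun s => b * F s) (b * h t) (Icc 0 T) t :=
        (((hFd t).hasDerivWithinAt).const_mul b)
      have h2 := h1.exp
      rw [hhg t ht] at h2
      convert h2 using 1; ring
    have := hw.mul hFt
    exact this.congr_deriv (by ring)
  have hEc : ContinuousOn E (Icc 0 T) := fun t ht => (hEd t ht).continuousWithinAt
  have hconst : E T = E 0 := by
    have := constant_of_has_deriv_right_zero hEc (fun x hx =>
      (hEd x (Ico_subset_Icc_self hx)).mono_of_mem_nhdsWithin
        (Icc_mem_nhdsGE_of_mem hx)) T (right_mem_Icc.mpr hTle)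
    exact this
  have hF0 : F 0 = 0 := by simp [hF]
  -- from the constancy, express the endpoint difference
  have hwT : ξ T - ζ T = (ξ 0 - ζ 0) * Real.exp (-(b * F T)) := by
    have h1 : (ξ T - ζ T) * Real.exp (b * F T) = ξ 0 - ζ 0 := by
      have := hconst
      simpa [hE, hF0] using this
    have := congrArg (fun x => x * Real.exp (-(b * F T))) h1
    simpa [mul_assoc, ← Real.exp_add] using this
  -- bound on F T
  have hδTle : T - δ₁ ≤ T := by linarith
  have h0δ : (0:ℝ) ≤ T - δ₁ := by linarith
  have hint1 : IntervalIntegrable h MeasureTheory.volume 0 (T - δ₁) :=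
    (hhc.intervalIntegrable _ _)
  have hint2 : IntervalIntegrable h MeasureTheory.volume (T - δ₁) T :=
    (hhc.intervalIntegrable _ _)
  have hFT : F T = (∫ s in (0:ℝ)..(T - δ₁), h s) + ∫ s in (T - δ₁)..T, h s :=
    (integral_add_adjacent_intervals hint1 hint2).symm
  have hb1 : 2 * (1 - c) * (T - δ₁) ≤ ∫ s in (0:ℝ)..(T - δ₁), h s := by
    have : ∫ s in (0:ℝ)..(T - δ₁), (2 * (1 - c) : ℝ) ≤ ∫ s in (0:ℝ)..(T - δ₁), h s := by
      apply integral_mono_on h0δ (intervalIntegrable_const) hint1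
      intro x hx
      have hx' : x ∈ Icc (0:ℝ) T := ⟨hx.1, le_trans hx.2 hδTle⟩
      rw [hhg x hx']
      have := hξ1 x hx; have := hζ1 x hx
      simp only [hg]; linarith
    rw [intervalIntegral.integral_const, smul_eq_mul] at this
    linarith
  have hb2 : (-4 : ℝ) * δ₁ ≤ ∫ s in (T - δ₁)..T, h s := by
    have : ∫ s in (T - δ₁)..T, (-4 : ℝ) ≤ ∫ s in (T - δ₁)..T, h s := by
      apply integral_mono_on hδTle (intervalIntegrable_const) hint2
      intro x hx
      have hx' : x ∈ Icc (0:ℝ) T := ⟨le_trans h0δ hx.1, hx.2⟩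
      rw [hhg x hx']
      have := hξ2 x hx'; have := hζ2 x hx'
      simp only [hg]; linarith
    have heq : ∫ s in (T - δ₁)..T, (-4 : ℝ) = -4 * δ₁ := by
      simp; ring
    linarith [heq ▸ this]
  have hFTlb : 2 * (1 - c) * (T - δ₁) + (-4) * δ₁ ≤ F T := by
    rw [hFT]; exact add_le_add hb1 hb2
  have hexp : Real.exp (-(b * F T)) ≤
      Real.exp (-2 * b * (1 - c) * (T - δ₁) + 4 * b * δ₁) := by
    apply Real.exp_le_exp.mpr
    nlinarith [hFTlb]
  calc |ξ T - ζ T| = |ξ 0 - ζ 0| * Real.exp (-(b * F T)) := by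
        rw [hwT, abs_mul, abs_of_pos (Real.exp_pos _)]
    _ ≤ |ξ 0 - ζ 0| * Real.exp (-2 * b * (1 - c) * (T - δ₁) + 4 * b * δ₁) :=
        mul_le_mul_of_nonneg_left hexp (abs_nonneg _)
    _ = _ := by ring
end

section
/- Let b > 0, ρ_D > 0 and set ε = exp(-b/(2ρ_D)) and T = 1/ρ_D. Let a : [0,T] → ℝ be continuous and let ξ, ζ : [0,T] → ℝ be differentiable solutions of the same equation u'(t) = -b u(t)² + b - a(t). Assume ξ(s) ∈ [-1, -1 + ε] and ζ(s) ∈ [-1, -1 + ε] for all s ∈ [0,T]. Then |ξ(T) - ζ(T)| ≥ exp( 2b(1 - ε)/ρ_D ) · |ξ(0) - ζ(0)|. (Two-solution form of the expansion estimate in Proposition 5.3(b): orbits remaining in the interval of expansion E = [-1, -1 + exp(-b/(2ρ_D))] over one return time separate at rate at least exp(2b(1 - exp(-b/(2ρ_D)))/ρ_D).) -/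
/-- two-solution form of the expansion estimate, Proposition 5.3(b):
two solutions of the same driven Riccati equation staying in the interval of expansion
`E = [-1, -1 + exp(-b/(2ρ_D))]` over one return time `T = 1/ρ_D` separate at rate
at least `exp(2b(1 - exp(-b/(2ρ_D)))/ρ_D)`. -/
theorem riccati_two_solution_expansion
    (b ρD : ℝ) (hb : 0 < b) (hρ : 0 < ρD)
    (a ξ ζ : ℝ → ℝ) (ha : ContinuousOn a (Set.Icc 0 (1 / ρD)))
    (hξ : ∀ t ∈ Set.Icc (0:ℝ) (1 / ρD),
      HasDerivWithinAt ξ (-b * (ξ t) ^ 2 + b - a t) (Set.Icc (0:ℝ) (1 / ρD)) t)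
    (hζ : ∀ t ∈ Set.Icc (0:ℝ) (1 / ρD),
      HasDerivWithinAt ζ (-b * (ζ t) ^ 2 + b - a t) (Set.Icc (0:ℝ) (1 / ρD)) t)
    (hξE : ∀ s ∈ Set.Icc (0:ℝ) (1 / ρD),
      ξ s ∈ Set.Icc (-1 : ℝ) (-1 + Real.exp (-b / (2 * ρD))))
    (hζE : ∀ s ∈ Set.Icc (0:ℝ) (1 / ρD),
      ζ s ∈ Set.Icc (-1 : ℝ) (-1 + Real.exp (-b / (2 * ρD)))) :
    Real.exp (2 * b * (1 - Real.exp (-b / (2 * ρD))) / ρD) * |ξ 0 - ζ 0|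
      ≤ |ξ (1 / ρD) - ζ (1 / ρD)| := by
  set T : ℝ := 1 / ρD with hT
  set ε : ℝ := Real.exp (-b / (2 * ρD)) with hε
  set K : ℝ := 2 * b * (1 - ε) with hK
  have hT0 : (0:ℝ) < T := by positivity
  set ψ : ℝ → ℝ := fun t => Real.exp (-(2 * K) * t) * (ξ t - ζ t) ^ 2 with hψ
  -- derivative of ψ at interior points
  have hderiv : ∀ t ∈ Set.Ioo (0:ℝ) T,
      HasDerivAt ψ (Real.exp (-(2 * K) * t) *
        ((-(2 * K)) * (ξ t - ζ t) ^ 2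
          + 2 * (ξ t - ζ t) * (-b * (ξ t + ζ t) * (ξ t - ζ t)))) t := by
    intro t ht
    have htI : t ∈ Set.Icc (0:ℝ) T := Set.Ioo_subset_Icc_self ht
    have hnhds : Set.Icc (0:ℝ) T ∈ nhds t := Icc_mem_nhds ht.1 ht.2
    have hξ' : HasDerivAt ξ (-b * (ξ t) ^ 2 + b - a t) t :=
      (hξ t htI).hasDerivAt hnhds
    have hζ' : HasDerivAt ζ (-b * (ζ t) ^ 2 + b - a t) t :=
      (hζ t htI).hasDerivAt hnhds
    have hw : HasDerivAt (fun s => ξ s - ζ s)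
        (-b * (ξ t + ζ t) * (ξ t - ζ t)) t := by
      have := hξ'.sub hζ'
      refine this.congr_deriv ?_
      ring
    have hw2 : HasDerivAt (fun s => (ξ s - ζ s) ^ 2)
        (2 * (ξ t - ζ t) * (-b * (ξ t + ζ t) * (ξ t - ζ t))) t := by
      have := hw.pow 2
      refine this.congr_deriv ?_
      push_cast
      ring
    have hE : HasDerivAt (fun s => Real.exp (-(2 * K) * s))
        (Real.exp (-(2 * K) * t) * (-(2 * K))) t := by
      have h1 : HasDerivAt (fun s : ℝ => -(2 * K) * s) (-(2 * K)) t := by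
        simpa using (hasDerivAt_id t).const_mul (-(2 * K))
      exact h1.exp
    have := hE.mul hw2
    refine this.congr_deriv ?_
    ring
  -- the derivative is nonneg
  have hnn : ∀ t ∈ Set.Ioo (0:ℝ) T,
      0 ≤ Real.exp (-(2 * K) * t) *
        ((-(2 * K)) * (ξ t - ζ t) ^ 2
          + 2 * (ξ t - ζ t) * (-b * (ξ t + ζ t) * (ξ t - ζ t))) := by
    intro t ht
    have htI : t ∈ Set.Icc (0:ℝ) T := Set.Ioo_subset_Icc_self ht
    have h1 := hξE t htI
    have h2 := hζE t htI
    apply mul_nonneg (Real.exp_pos _).le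
    have hs : ξ t + ζ t ≤ -2 + 2 * ε := by
      have := h1.2; have := h2.2; simp only [hε] at *; linarith
    have h3 : 0 ≤ -K - b * (ξ t + ζ t) := by
      have hb2 : b * (ξ t + ζ t) ≤ b * (-2 + 2 * ε) :=
        mul_le_mul_of_nonneg_left hs hb.le
      rw [hK]; nlinarith
    nlinarith [mul_nonneg (sq_nonneg (ξ t - ζ t)) h3]
  -- continuity
  have hcξ : ContinuousOn ξ (Set.Icc 0 T) := fun t ht => (hξ t ht).continuousWithinAt
  have hcζ : ContinuousOn ζ (Set.Icc 0 T) := fun t ht => (hζ t ht).continuousWithinAt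
  have hcψ : ContinuousOn ψ (Set.Icc 0 T) := by
    apply ContinuousOn.mul
    · exact (Real.continuous_exp.comp (continuous_const.mul continuous_id)).continuousOn
    · exact (hcξ.sub hcζ).pow 2
  -- monotonicity
  have hmono : MonotoneOn ψ (Set.Icc 0 T) := by
    apply monotoneOn_of_deriv_nonneg (convex_Icc 0 T) hcψ
    · intro t ht
      rw [interior_Icc] at ht
      exact (hderiv t ht).differentiableAt.differentiableWithinAt
    · intro t ht
      rw [interior_Icc] at ht
      rw [(hderiv t ht).deriv]
      exact hnn t ht
  have key : ψ 0 ≤ ψ T :=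
    hmono (Set.left_mem_Icc.2 hT0.le) (Set.right_mem_Icc.2 hT0.le) hT0.le
  simp only [hψ, mul_zero, Real.exp_zero, one_mul] at key
  -- conclude
  set A : ℝ := Real.exp (2 * b * (1 - ε) / ρD) with hA
  have hid : A ^ 2 * Real.exp (-(2 * K) * T) = 1 := by
    rw [hA, sq, ← Real.exp_add, ← Real.exp_add, ← Real.exp_zero]
    congr 1
    rw [hK, hT]
    field_simp
    rw [Real.exp_zero]
    ring
  have h1 : (A * |ξ 0 - ζ 0|) ^ 2 ≤ |ξ T - ζ T| ^ 2 := by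
    calc (A * |ξ 0 - ζ 0|) ^ 2 = A ^ 2 * (ξ 0 - ζ 0) ^ 2 := by
          rw [mul_pow, sq_abs]
      _ ≤ A ^ 2 * (Real.exp (-(2 * K) * T) * (ξ T - ζ T) ^ 2) := by
          apply mul_le_mul_of_nonneg_left key (sq_nonneg A)
      _ = |ξ T - ζ T| ^ 2 := by rw [← mul_assoc, hid, one_mul, sq_abs]
  have hA0 : 0 ≤ A * |ξ 0 - ζ 0| := by positivity
  nlinarith [abs_nonneg (ξ T - ζ T), h1, hA0]
end

section
/- Let b > 0, c ∈ (0,1), ρ_D > 0 and set T = 1/ρ_D. Let a : [0,T] → ℝ be continuous and let ξ, ζ : [0,T] → ℝ be differentiable solutions of the same equation u'(t) = -b u(t)² + b - a(t). Assume ξ(s) ∈ [-1, 1 + c) and ζ(s) ∈ [-1, 1 + c) for all s ∈ [0,T], and ξ(0) ≠ ζ(0). Then exp( -2b(1+c)/ρ_D ) · |ξ(0) - ζ(0)| < |ξ(T) - ζ(T)| ≤ exp( 2b/ρ_D ) · |ξ(0) - ζ(0)|. (Two-solution form of Proposition 5.3(c): two-sided bounds exp(-2b(1+c)/ρ_D)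 < ∂_x ξ̃ ≤ exp(2b/ρ_D) on the derivative of the return map over the section Γ = 𝕋^d × [-1, 1+c].) -/
/-- two-solution form of Proposition 5.3(c): two distinct solutions of the
same driven Riccati equation staying in `[-1, 1 + c)` over one return time `T = 1/ρ_D`
separate by a factor strictly greater than `exp(-2b(1+c)/ρ_D)` and at most
`exp(2b/ρ_D)`. -/
theorem riccati_two_solution_two_sided_bounds
    (b c ρD : ℝ) (hb : 0 < b) (hc0 : 0 < c) (hc1 : c < 1) (hρ : 0 < ρD)
    (a ξ ζ : ℝ → ℝ) (ha : ContinuousOn a (Set.Icc 0 (1 / ρD)))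
    (hξ : ∀ t ∈ Set.Icc (0:ℝ) (1 / ρD),
      HasDerivWithinAt ξ (-b * (ξ t) ^ 2 + b - a t) (Set.Icc (0:ℝ) (1 / ρD)) t)
    (hζ : ∀ t ∈ Set.Icc (0:ℝ) (1 / ρD),
      HasDerivWithinAt ζ (-b * (ζ t) ^ 2 + b - a t) (Set.Icc (0:ℝ) (1 / ρD)) t)
    (hξΓ : ∀ s ∈ Set.Icc (0:ℝ) (1 / ρD), ξ s ∈ Set.Ico (-1 : ℝ) (1 + c))
    (hζΓ : ∀ s ∈ Set.Icc (0:ℝ) (1 / ρD), ζ s ∈ Set.Ico (-1 : ℝ) (1 + c))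
    (hne : ξ 0 ≠ ζ 0) :
    Real.exp (-2 * b * (1 + c) / ρD) * |ξ 0 - ζ 0| < |ξ (1 / ρD) - ζ (1 / ρD)|
      ∧ |ξ (1 / ρD) - ζ (1 / ρD)| ≤ Real.exp (2 * b / ρD) * |ξ 0 - ζ 0| := by
  set T : ℝ := 1 / ρD with hTdef
  have hT0 : 0 < T := by positivity
  set s : Set ℝ := Set.Icc (0:ℝ) T with hsdef
  have h0s : (0:ℝ) ∈ s := ⟨le_refl _, hT0.le⟩
  have hTs : T ∈ s := ⟨hT0.le, le_refl _⟩
  set f : ℝ → ℝ := fun t => -b * (ξ t + ζ t) with hfdef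
  have hcξ : ContinuousOn ξ s := fun x hx => (hξ x hx).continuousWithinAt
  have hcζ : ContinuousOn ζ s := fun x hx => (hζ x hx).continuousWithinAt
  have hcf : ContinuousOn f s := continuousOn_const.mul (hcξ.add hcζ)
  set w : ℝ → ℝ := fun t => ξ t - ζ t with hwdef
  have hcw : ContinuousOn w s := hcξ.sub hcζ
  set F : ℝ → ℝ := fun x => ∫ t in (0:ℝ)..x, f t with hFdef
  have huIcc : Set.uIcc (0:ℝ) T = s := Set.uIcc_of_le hT0.le
  have hfint : IntervalIntegrable f MeasureTheory.volume 0 T :=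
    (hcf.mono (by rw [huIcc])).intervalIntegrable
  have hFcont : ContinuousOn F s := by
    have := intervalIntegral.continuousOn_primitive_interval'
      (μ := MeasureTheory.volume) (b₁ := (0:ℝ)) (b₂ := T) (a := (0:ℝ)) hfint
      (by rw [huIcc]; exact h0s)
    rwa [huIcc] at this
  have hFd : ∀ x ∈ Set.Ico (0:ℝ) T, HasDerivWithinAt F (f x) (Set.Ici x) x := by
    intro x hx
    have hxs : x ∈ s := ⟨hx.1, hx.2.le⟩
    have hmem : s ∈ nhdsWithin x (Set.Ioi x) := Icc_mem_nhdsGT_of_mem hx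
    refine intervalIntegral.integral_hasDerivWithinAt_right ?_
      ⟨s, hmem, (hcf.aestronglyMeasurable measurableSet_Icc)⟩
      ((hcf x hxs).mono_of_mem_nhdsWithin hmem)
    · refine (hcf.mono ?_).intervalIntegrable
      rw [Set.uIcc_of_le hx.1]
      exact Set.Icc_subset_Icc le_rfl hx.2.le
  -- w has derivative f x * w x
  have hwd : ∀ x ∈ s, HasDerivWithinAt w (f x * w x) s x := by
    intro x hx
    have := (hξ x hx).sub (hζ x hx)
    refine this.congr_deriv ?_
    simp only [hfdef, hwdef]
    ring
  -- G is constant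
  set G : ℝ → ℝ := fun t => w t * Real.exp (-F t) with hGdef
  have hGc : ContinuousOn G s :=
    hcw.mul (Real.continuous_exp.comp_continuousOn hFcont.neg)
  have hGd : ∀ x ∈ Set.Ico (0:ℝ) T, HasDerivWithinAt G 0 (Set.Ici x) x := by
    intro x hx
    have hxs : x ∈ s := ⟨hx.1, hx.2.le⟩
    have hmem : s ∈ nhdsWithin x (Set.Ici x) := Icc_mem_nhdsGE_of_mem hx
    have h1 : HasDerivWithinAt w (f x * w x) (Set.Ici x) x :=
      (hwd x hxs).mono_of_mem_nhdsWithin hmem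
    have h2 : HasDerivWithinAt (fun t => Real.exp (-F t))
        (Real.exp (-F x) * (-f x)) (Set.Ici x) x := (hFd x hx).neg.exp
    have := h1.mul h2
    refine this.congr_deriv ?_
    ring
  have hGconst : ∀ x ∈ s, G x = G 0 :=
    constant_of_has_deriv_right_zero hGc hGd
  have hF0 : F 0 = 0 := intervalIntegral.integral_same
  have hG0 : G 0 = w 0 := by simp [hGdef, hF0]
  have hwT : w T = w 0 * Real.exp (F T) := by
    have h := hGconst T hTs
    rw [hG0] at h
    have h' : w T * Real.exp (-F T) = w 0 := h
    rw [← h', mul_assoc, ← Real.exp_add, neg_add_cancel, Real.exp_zero, mul_one]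
  have habs : |w T| = Real.exp (F T) * |w 0| := by
    rw [hwT, abs_mul, Real.abs_exp, mul_comm]
  have hw0pos : 0 < |w 0| := abs_pos.2 (sub_ne_zero.2 hne)
  -- upper bound on F T
  have hupper : F T ≤ 2 * b / ρD := by
    have hmono : ∀ x ∈ s, f x ≤ 2 * b := by
      intro x hx
      have h1 := (hξΓ x hx).1
      have h2 := (hζΓ x hx).1
      simp only [hfdef]
      nlinarith
    have := intervalIntegral.integral_mono_on hT0.le hfint
      intervalIntegrable_const hmono
    have h2 : ∫ _ in (0:ℝ)..T, (2*b : ℝ) = 2 * b * T := by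
      rw [intervalIntegral.integral_const, smul_eq_mul, sub_zero, mul_comm]
    rw [h2] at this
    calc F T ≤ 2 * b * T := this
      _ = 2 * b / ρD := by rw [hTdef]; ring
  -- lower bound on F T
  have hlower : -2 * b * (1 + c) / ρD < F T := by
    obtain ⟨x₀, hx₀s, hmin⟩ := isCompact_Icc.exists_isMinOn
      (Set.nonempty_Icc.2 hT0.le) hcf
    have hm : -(2 * b * (1 + c)) < f x₀ := by
      have h1 := (hξΓ x₀ hx₀s).2
      have h2 := (hζΓ x₀ hx₀s).2
      simp only [hfdef]
      nlinarith
    have hge : ∀ x ∈ s, f x₀ ≤ f x := fun x hx => hmin hx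
    have hint2 : (∫ _ in (0:ℝ)..T, f x₀) ≤ F T :=
      intervalIntegral.integral_mono_on hT0.le intervalIntegrable_const hfint hge
    have h2 : ∫ _ in (0:ℝ)..T, f x₀ = f x₀ * T := by
      rw [intervalIntegral.integral_const, smul_eq_mul, sub_zero, mul_comm]
    rw [h2] at hint2
    have : -(2 * b * (1 + c)) * T < f x₀ * T :=
      mul_lt_mul_of_pos_right hm hT0
    calc -2 * b * (1 + c) / ρD = -(2 * b * (1 + c)) * T := by rw [hTdef]; ring
      _ < f x₀ * T := this
      _ ≤ F T := hint2
  constructor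
  · calc Real.exp (-2 * b * (1 + c) / ρD) * |ξ 0 - ζ 0|
        < Real.exp (F T) * |w 0| := by
          exact mul_lt_mul_of_pos_right (Real.exp_lt_exp.2 hlower) hw0pos
      _ = |ξ (1/ρD) - ζ (1/ρD)| := habs.symm
  · calc |ξ (1/ρD) - ζ (1/ρD)| = Real.exp (F T) * |w 0| := habs
      _ ≤ Real.exp (2 * b / ρD) * |ξ 0 - ζ 0| :=
        mul_le_mul_of_nonneg_right (Real.exp_le_exp.2 hupper) (abs_nonneg _)
end

section
/- Let ρ_D > 0, δ₁ ∈ (0, 1/(36ρ_D)) and c ∈ (0, 1/4). Then there exists b₀ > 0 such that for all b ≥ b₀ the following holds. Let 0 ≤ t₁ ≤ 1/ρ_D - δ₁, t ∈ [t₁, 1/ρ_D], and let ξ : [0, 1/ρ_D] → ℝ be continuous with ξ(τ) ≥ 1 - c for all τ ∈ [0, 1/ρ_D - δ₁] and ξ(τ) ≥ -2 for all τ ∈ [0, 1/ρ_D]. Then: (i) ∫₀^{t - t₁} exp( -2b ∫_s^{t - t₁} ξ(τ + t₁) dτ ) ds ≤ exp(5 b δ₁); and (ii) if moreover t₁ ≤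 1/ρ_D - 5δ₁, then exp( -2b ∫₀^{t - t₁} ξ(τ + t₁) dτ ) ≤ 1. (Claim 5.6, inequalities (eq: upper bound exp int) and (eq: dx xi <= 1), expressed for the function ξ(τ) = ξ_β(τ, θ, x) along an orbit starting in 𝕋^d × C, for which -2b ξ is the x-derivative of the vector field along the orbit.) -/
open MeasureTheory

/-- Lower bound an interval integral by a constant lower bound on the integrand. -/
lemma int_ge_const (f : ℝ → ℝ) {a b C : ℝ} (hab : a ≤ b)
    (hf : IntervalIntegrable f volume a b)
    (h : ∀ τ ∈ Set.Icc a b, C ≤ f τ) :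
    C * (b - a) ≤ ∫ τ in a..b, f τ := by
  have := intervalIntegral.integral_mono_on hab (intervalIntegrable_const (c := C)) hf h
  simpa [intervalIntegral.integral_const, smul_eq_mul, mul_comm] using this

/-- Claim 5.6, inequalities (eq: upper bound exp int) and
(eq: dx xi <= 1): Duhamel-type integral estimates along an orbit `ξ` of the driven
Riccati flow starting in the contracting region, for large `b`. -/
theorem duhamel_integral_estimates
    (ρD δ₁ c : ℝ) (hρ : 0 < ρD) (hδ0 : 0 < δ₁) (hδ : δ₁ < 1 / (36 * ρD))
    (hc0 : 0 < c) (hc : c < 1 / 4) :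
    ∃ b₀ : ℝ, 0 < b₀ ∧ ∀ b ≥ b₀, ∀ t₁ t : ℝ, ∀ ξ : ℝ → ℝ,
      0 ≤ t₁ → t₁ ≤ 1 / ρD - δ₁ → t ∈ Set.Icc t₁ (1 / ρD) →
      ContinuousOn ξ (Set.Icc 0 (1 / ρD)) →
      (∀ τ ∈ Set.Icc (0:ℝ) (1 / ρD - δ₁), 1 - c ≤ ξ τ) →
      (∀ τ ∈ Set.Icc (0:ℝ) (1 / ρD), -2 ≤ ξ τ) →
      ((∫ s in (0:ℝ)..(t - t₁),
          Real.exp (-2 * b * ∫ τ in s..(t - t₁), ξ (τ + t₁)))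
        ≤ Real.exp (5 * b * δ₁))
      ∧ (t₁ ≤ 1 / ρD - 5 * δ₁ →
          Real.exp (-2 * b * ∫ τ in (0:ℝ)..(t - t₁), ξ (τ + t₁)) ≤ 1) := by
  refine ⟨max 1 ((Real.log (1 / ρD) + 1) / δ₁),
    lt_of_lt_of_le one_pos (le_max_left _ _), ?_⟩
  intro b hb t₁ t ξ ht₁0 ht₁T ht hξc hξ1 hξ2
  have hb1 : (1:ℝ) ≤ b := le_trans (le_max_left _ _) hb
  have hb0 : (0:ℝ) ≤ b := by linarith
  have hT0 : 0 < 1 / ρD := by positivity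
  have hTexp : 1 / ρD ≤ Real.exp (b * δ₁) := by
    have h1 : (Real.log (1 / ρD) + 1) / δ₁ ≤ b := le_trans (le_max_right _ _) hb
    rw [div_le_iff₀ hδ0] at h1
    calc 1 / ρD = Real.exp (Real.log (1 / ρD)) := (Real.exp_log hT0).symm
      _ ≤ Real.exp (b * δ₁) := Real.exp_le_exp.mpr (by nlinarith)
  obtain ⟨ht₁t, htT⟩ := ht
  set u := t - t₁ with hu
  have hu0 : 0 ≤ u := by rw [hu]; linarith
  have huT : u ≤ 1 / ρD - t₁ := by rw [hu]; linarith
  set f : ℝ → ℝ := fun τ => ξ (τ + t₁) with hf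
  -- continuity and integrability of f on [0, u]
  have hfc : ContinuousOn f (Set.Icc 0 u) := by
    apply hξc.comp ((continuous_id.add continuous_const).continuousOn)
    intro τ hτ
    simp only [Set.mem_Icc, id_eq, Pi.add_apply] at hτ ⊢
    constructor <;> [linarith [hτ.1]; linarith [hτ.2, huT]]
  have hfint : ∀ a' b' : ℝ, 0 ≤ a' → a' ≤ b' → b' ≤ u →
      IntervalIntegrable f volume a' b' := by
    intro a' b' h1 h2 h3
    apply (hfc.mono ?_).intervalIntegrable
    rw [Set.uIcc_of_le h2]
    intro x hx; exact ⟨by linarith [hx.1], by linarith [hx.2]⟩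
  clear_value u f
  set W : ℝ := 1 / ρD - δ₁ - t₁ with hW
  clear_value W
  have hW0 : 0 ≤ W := by rw [hW]; linarith
  have huW : u ≤ W + δ₁ := by rw [hW]; linarith
  -- pointwise lower bounds on f
  have hfl1 : ∀ τ, 0 ≤ τ → τ ≤ W → 1 - c ≤ f τ := by
    intro τ h1 h2
    rw [hf]
    exact hξ1 _ ⟨by linarith, by rw [hW] at h2; linarith⟩
  have hfl2 : ∀ τ, 0 ≤ τ → τ ≤ u → -2 ≤ f τ := by
    intro τ h1 h2
    rw [hf]
    exact hξ2 _ ⟨by linarith, by linarith [huT]⟩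
  -- key lower bound on tail integrals
  have key : ∀ s ∈ Set.Icc (0:ℝ) u, -2 * δ₁ ≤ ∫ τ in s..u, f τ := by
    rintro s ⟨hs0, hsu⟩
    set W' : ℝ := min u W with hW'
    have hW'u : W' ≤ u := min_le_left _ _
    have hW'0 : 0 ≤ W' := le_min hu0 hW0
    have huW' : u - δ₁ ≤ W' := le_min (by linarith) (by linarith)
    by_cases hs : s ≤ W'
    · have i1 : IntervalIntegrable f volume s W' := hfint _ _ hs0 hs hW'u
      have i2 : IntervalIntegrable f volume W' u := hfint _ _ hW'0 hW'u le_rfl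
      rw [← intervalIntegral.integral_add_adjacent_intervals i1 i2]
      have b1 : (1 - c) * (W' - s) ≤ ∫ τ in s..W', f τ :=
        int_ge_const f hs i1 fun τ hτ =>
          hfl1 τ (le_trans hs0 hτ.1) (le_trans hτ.2 (min_le_right _ _))
      have b2 : (-2) * (u - W') ≤ ∫ τ in W'..u, f τ :=
        int_ge_const f hW'u i2 fun τ hτ => hfl2 τ (le_trans hW'0 hτ.1) hτ.2
      have hp : (0:ℝ) ≤ (1 - c) * (W' - s) :=
        mul_nonneg (by linarith) (by linarith)
      linarith
    · push_neg at hs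
      have b2 : (-2) * (u - s) ≤ ∫ τ in s..u, f τ :=
        int_ge_const f hsu (hfint _ _ hs0 hsu le_rfl) fun τ hτ =>
          hfl2 τ (le_trans hs0 hτ.1) hτ.2
      have : u - s ≤ δ₁ := by
        rcases min_cases u W with ⟨h1, _⟩ | ⟨h1, h2⟩
        · rw [hW', h1] at hs; linarith
        · rw [hW', h1] at hs; linarith
      linarith
  constructor
  · -- part (i)
    have hgc : ContinuousOn (fun s => Real.exp (-2 * b * ∫ τ in s..u, f τ))
        (Set.Icc 0 u) := by
      have hprim : ContinuousOn (fun s => ∫ τ in s..u, f τ) (Set.Icc 0 u) := by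
        have := intervalIntegral.continuousOn_primitive_interval_left
          (f := f) (a := 0) (b := u) (μ := volume)
          (by rw [Set.uIcc_of_le hu0]; exact hfc.integrableOn_compact isCompact_Icc)
        rwa [Set.uIcc_of_le hu0] at this
      exact (Real.continuous_exp.comp
        (continuous_const.mul continuous_id)).comp_continuousOn hprim
    have hgint : IntervalIntegrable
        (fun s => Real.exp (-2 * b * ∫ τ in s..u, f τ)) volume 0 u := by
      apply hgc.intervalIntegrable_of_Icc hu0
    have mono := intervalIntegral.integral_mono_on hu0 hgint
      (intervalIntegrable_const (c := Real.exp (4 * b * δ₁)))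
      (fun s hs => by
        apply Real.exp_le_exp.mpr
        have hk := key s hs
        nlinarith [mul_le_mul_of_nonneg_left hk hb0])
    calc (∫ s in (0:ℝ)..u, Real.exp (-2 * b * ∫ τ in s..u, f τ))
        ≤ ∫ _ in (0:ℝ)..u, Real.exp (4 * b * δ₁) := mono
      _ = u * Real.exp (4 * b * δ₁) := by
          simp [intervalIntegral.integral_const, smul_eq_mul]
      _ ≤ Real.exp (b * δ₁) * Real.exp (4 * b * δ₁) := by
          have : u ≤ Real.exp (b * δ₁) := le_trans (by linarith) hTexp
          exact mul_le_mul_of_nonneg_right this (Real.exp_pos _).le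
      _ = Real.exp (5 * b * δ₁) := by rw [← Real.exp_add]; ring_nf
  · -- part (ii)
    intro ht₁5
    have hW4 : 4 * δ₁ ≤ W := by rw [hW]; linarith
    have hint0 : (0:ℝ) ≤ ∫ τ in (0:ℝ)..u, f τ := by
      by_cases hcase : u ≤ W
      · have b1 : (1 - c) * (u - 0) ≤ ∫ τ in (0:ℝ)..u, f τ :=
          int_ge_const f hu0 (hfint _ _ le_rfl hu0 le_rfl) fun τ hτ =>
            hfl1 τ hτ.1 (le_trans hτ.2 hcase)
        nlinarith [mul_nonneg (by linarith : (0:ℝ) ≤ 1 - c) hu0]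
      · push_neg at hcase
        have hWu : W ≤ u := le_of_lt hcase
        have i1 : IntervalIntegrable f volume 0 W := hfint _ _ le_rfl hW0 hWu
        have i2 : IntervalIntegrable f volume W u := hfint _ _ hW0 hWu le_rfl
        rw [← intervalIntegral.integral_add_adjacent_intervals i1 i2]
        have b1 : (1 - c) * (W - 0) ≤ ∫ τ in (0:ℝ)..W, f τ :=
          int_ge_const f hW0 i1 fun τ hτ => hfl1 τ hτ.1 hτ.2
        have b2 : (-2) * (u - W) ≤ ∫ τ in W..u, f τ :=
          int_ge_const f hWu i2 fun τ hτ => hfl2 τ (le_trans hW0 hτ.1) hτ.2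
        have hp : (1 - c) * (4 * δ₁) ≤ (1 - c) * W :=
          mul_le_mul_of_nonneg_left hW4 (by linarith)
        have hq : c * δ₁ ≤ (1/4) * δ₁ :=
          mul_le_mul_of_nonneg_right (le_of_lt hc) (le_of_lt hδ0)
        nlinarith
    calc Real.exp (-2 * b * ∫ τ in (0:ℝ)..u, f τ)
        ≤ Real.exp 0 := Real.exp_le_exp.mpr
          (by nlinarith [mul_nonneg hb0 hint0])
      _ = 1 := Real.exp_zero
end
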